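/- Let G be the symmetric 4×4 integer matrix with rows (3,4,1,1), (4,10,0,0), (1,0,3,0), (1,0,0,3), and let e₀ = (1,0,0,0). Then G is positive definite (⟨v,v⟩_G > 0 for every nonzero v ∈ ℤ⁴), the lattice (ℤ⁴, G) has no short root (no v ∈ ℤ⁴ with ⟨v,v⟩_G = 2 and ⟨v,e₀⟩_G = 0), and it has no long root (no v ∈ ℤ⁴ with ⟨v,v⟩_G = 6, ⟨v,e₀⟩_G = 0, and all coordinates of v − e₀ or all coordinates of v + e₀ divisible by 3). -/
import Mathlib


open Matrix

lemma aux16_pos (a b c d : ℤ) (h : ¬(a = 0 ∧ b = 0 ∧ c = 0 ∧ d = 0)) :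
    0 < a*(3*a+4*b+c+d) + b*(4*a+10*b) + c*(a+3*c) + d*(a+3*d) := by
  by_contra hle
  push_neg at hle
  have hc : c = 0 := by nlinarith [sq_nonneg (3*a+4*b+c+d), sq_nonneg (7*b-2*c-2*d), sq_nonneg (c-d), sq_nonneg d]
  have hd : d = 0 := by nlinarith [sq_nonneg (3*a+4*b+c+d), sq_nonneg (7*b-2*c-2*d), sq_nonneg (c-d), sq_nonneg c]
  have hb : b = 0 := by nlinarith [sq_nonneg (3*a+4*b+c+d), sq_nonneg (c-d), sq_nonneg c, sq_nonneg d, sq_nonneg b]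
  have ha : a = 0 := by nlinarith [sq_nonneg (7*b-2*c-2*d), sq_nonneg (c-d), sq_nonneg c, sq_nonneg d, sq_nonneg a]
  exact h ⟨ha, hb, hc, hd⟩

lemma aux16_short (a b c d : ℤ)
    (hQ : a*(3*a+4*b+c+d) + b*(4*a+10*b) + c*(a+3*c) + d*(a+3*d) = 2)
    (hX : 3*a + 4*b + c + d = 0) : False := by
  have hc : -1 ≤ c ∧ c ≤ 1 := by
    constructor <;> nlinarith [sq_nonneg (7*b-2*c-2*d), sq_nonneg (c-d), sq_nonneg d, sq_nonneg (c+1), sq_nonneg (c-1)]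
  have hd : -1 ≤ d ∧ d ≤ 1 := by
    constructor <;> nlinarith [sq_nonneg (7*b-2*c-2*d), sq_nonneg (c-d), sq_nonneg c, sq_nonneg (d+1), sq_nonneg (d-1)]
  have hb : -1 ≤ b ∧ b ≤ 1 := by
    constructor <;> nlinarith [sq_nonneg (c-d), sq_nonneg c, sq_nonneg d, sq_nonneg (b+1), sq_nonneg (b-1), sq_nonneg (7*b-2*c-2*d)]
  have ha : -2 ≤ a ∧ a ≤ 2 := by omega
  obtain ⟨hc1, hc2⟩ := hc; obtain ⟨hd1, hd2⟩ := hd; obtain ⟨hb1, hb2⟩ := hb; obtain ⟨ha1, ha2⟩ := ha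
  interval_cases a <;> interval_cases b <;> interval_cases c <;> interval_cases d <;> omega

lemma aux16_long (a b c d : ℤ)
    (hQ : a*(3*a+4*b+c+d) + b*(4*a+10*b) + c*(a+3*c) + d*(a+3*d) = 6)
    (hX : 3*a + 4*b + c + d = 0)
    (hdvd : ((3:ℤ) ∣ a - 1 ∨ (3:ℤ) ∣ a + 1) ∧ (3:ℤ) ∣ b ∧ (3:ℤ) ∣ c ∧ (3:ℤ) ∣ d) : False := by
  obtain ⟨hda, hdb, hdc, hdd⟩ := hdvd
  have hc : -1 ≤ c ∧ c ≤ 1 := by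
    constructor <;> nlinarith [sq_nonneg (7*b-2*c-2*d), sq_nonneg (c-d), sq_nonneg d, sq_nonneg (c+2), sq_nonneg (c-2)]
  have hc0 : c = 0 := by omega
  have hd : -1 ≤ d ∧ d ≤ 1 := by
    constructor <;> nlinarith [sq_nonneg (7*b-2*c-2*d), sq_nonneg (c-d), sq_nonneg c, sq_nonneg (d+2), sq_nonneg (d-2)]
  have hd0 : d = 0 := by omega
  subst hc0 hd0
  have hb : -1 ≤ b ∧ b ≤ 1 := by
    constructor <;> nlinarith [sq_nonneg (b+1), sq_nonneg (b-1)]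
  have hb0 : b = 0 := by omega
  subst hb0
  omega

/-- The rank 4 lattice with Gram matrix `(3,4,1,1;4,10,0,0;1,0,3,0;1,0,0,3)` is
positive definite and has neither short roots (norm 2 vectors orthogonal to `e₀`)
nor long roots (norm 6 vectors `v` orthogonal to `e₀` with `v − e₀` or `v + e₀`
divisible by 3). -/
theorem stmt16 :
    let G : Matrix (Fin 4) (Fin 4) ℤ := !![3, 4, 1, 1; 4, 10, 0, 0; 1, 0, 3, 0; 1, 0, 0, 3]
    let e₀ : Fin 4 → ℤ := ![1, 0, 0, 0]
    (∀ v : Fin 4 → ℤ, v ≠ 0 → 0 < v ⬝ᵥ G.mulVec v) ∧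
    (¬ ∃ v : Fin 4 → ℤ, v ⬝ᵥ G.mulVec v = 2 ∧ v ⬝ᵥ G.mulVec e₀ = 0) ∧
    (¬ ∃ v : Fin 4 → ℤ, v ⬝ᵥ G.mulVec v = 6 ∧ v ⬝ᵥ G.mulVec e₀ = 0 ∧
      ((∀ i : Fin 4, (3 : ℤ) ∣ (v - e₀) i) ∨ (∀ i : Fin 4, (3 : ℤ) ∣ (v + e₀) i))) := by
  intro G e₀
  have hQ : ∀ v : Fin 4 → ℤ, v ⬝ᵥ G.mulVec v =
      v 0*(3*v 0+4*v 1+v 2+v 3) + v 1*(4*v 0+10*v 1) + v 2*(v 0+3*v 2) + v 3*(v 0+3*v 3) := by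
    intro v
    simp [G, Matrix.mulVec, dotProduct, Fin.sum_univ_four, Matrix.vecHead, Matrix.vecTail]
    try ring
  have hX : ∀ v : Fin 4 → ℤ, v ⬝ᵥ G.mulVec e₀ = 3*v 0 + 4*v 1 + v 2 + v 3 := by
    intro v
    simp [G, e₀, Matrix.mulVec, dotProduct, Fin.sum_univ_four, Matrix.vecHead, Matrix.vecTail]
    try ring
  refine ⟨?_, ?_, ?_⟩
  · intro v hv
    rw [hQ]
    apply aux16_pos
    rintro ⟨h0, h1, h2, h3⟩
    apply hv
    funext i
    fin_cases i <;> assumption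
  · rintro ⟨v, h2, h0⟩
    rw [hQ] at h2
    rw [hX] at h0
    exact aux16_short _ _ _ _ h2 h0
  · rintro ⟨v, h6, h0, hdvd⟩
    rw [hQ] at h6
    rw [hX] at h0
    refine aux16_long (v 0) (v 1) (v 2) (v 3) h6 h0 ?_
    rcases hdvd with h | h
    · have ha := h 0; have hb := h 1; have hc := h 2; have hd := h 3
      simp [e₀] at ha hb hc hd
      exact ⟨Or.inl ha, hb, hc, hd⟩
    · have ha := h 0; have hb := h 1; have hc := h 2; have hd := h 3
      simp [e₀] at ha hb hc hd
      exact ⟨Or.inr ha, hb, hc, hd⟩
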